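/- Hadamard's inequality: for any real k×k matrix N = (n_{i,j}), det(N)² ≤ Π_{j=1}^{k} Σ_{i=1}^{k} n_{i,j}². -/

import Mathlib

open Finset

/-- For a real positive semidefinite matrix with trace equal to its size,
the determinant is at most 1 (AM-GM on eigenvalues). -/
lemma det_le_one_of_psd_trace {k : ℕ} (hk : 0 < k) (G : Matrix (Fin k) (Fin k) ℝ)
    (hG : G.PosSemidef) (htr : G.trace = (k : ℝ)) : G.det ≤ 1 := by
  have hH := hG.1
  have hev : ∀ i, 0 ≤ hH.eigenvalues i := fun i => hG.eigenvalues_nonneg i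
  have hdet : G.det = ∏ i, hH.eigenvalues i := by
    simpa using hH.det_eq_prod_eigenvalues
  have hsum : ∑ i, hH.eigenvalues i = (k : ℝ) := by
    rw [← htr]
    nth_rewrite 2 [hH.spectral_theorem]
    rw [Unitary.conjStarAlgAut_apply, Matrix.trace_mul_cycle, Unitary.coe_star_mul_self, Matrix.one_mul,
      Matrix.trace_diagonal]
    simp
  have hAM := Real.geom_mean_le_arith_mean (Finset.univ : Finset (Fin k)) (fun _ => 1)
    hH.eigenvalues (fun _ _ => zero_le_one) (by simp [hk]) (fun i _ => hev i)
  simp only [Real.rpow_one, one_mul, Finset.sum_const, Finset.card_univ, Fintype.card_fin,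
    nsmul_eq_mul, mul_one, hsum] at hAM
  rw [div_self (by positivity)] at hAM
  have hprodnn : 0 ≤ ∏ i, hH.eigenvalues i := Finset.prod_nonneg fun i _ => hev i
  have := Real.rpow_le_rpow (Real.rpow_nonneg hprodnn _) hAM (Nat.cast_nonneg k)
  rw [← Real.rpow_mul hprodnn, inv_mul_cancel₀ (by positivity), Real.rpow_one,
    Real.one_rpow] at this
  rw [hdet]
  exact this

theorem stmt12 {k : ℕ} (N : Matrix (Fin k) (Fin k) ℝ) :
    N.det ^ 2 ≤ ∏ j, ∑ i, (N i j) ^ 2 := by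
  rcases Nat.eq_zero_or_pos k with hk | hk
  · subst hk; simp [Matrix.det_fin_zero]
  by_cases hz : ∃ j, ∑ i, (N i j) ^ 2 = 0
  · obtain ⟨j, hj⟩ := hz
    have hcol : ∀ i, N i j = 0 := fun i =>
      pow_eq_zero_iff two_ne_zero |>.mp
        ((Finset.sum_eq_zero_iff_of_nonneg fun i _ => sq_nonneg (N i j)).mp hj i (mem_univ i))
    rw [Matrix.det_eq_zero_of_column_eq_zero j hcol]
    simpa using Finset.prod_nonneg fun j _ => Finset.sum_nonneg fun i _ => sq_nonneg (N i j)
  push_neg at hz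
  have hc : ∀ j, 0 < ∑ i, (N i j) ^ 2 := fun j =>
    lt_of_le_of_ne (Finset.sum_nonneg fun i _ => sq_nonneg _) (Ne.symm (hz j))
  set c : Fin k → ℝ := fun j => ∑ i, (N i j) ^ 2 with hcdef
  set M : Matrix (Fin k) (Fin k) ℝ := Matrix.of fun i j => N i j / Real.sqrt (c j) with hM
  have hNM : N = M * Matrix.diagonal fun j => Real.sqrt (c j) := by
    ext i j
    simp [Matrix.mul_diagonal, hM, div_mul_cancel₀, Real.sqrt_ne_zero'.mpr (hc j)]
    exact (div_mul_cancel₀ _ (Real.sqrt_ne_zero'.mpr (hc j))).symm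
  have hdetN : N.det = M.det * ∏ j, Real.sqrt (c j) := by
    rw [hNM, Matrix.det_mul, Matrix.det_diagonal]
  set G : Matrix (Fin k) (Fin k) ℝ := M.conjTranspose * M with hG
  have hGpsd : G.PosSemidef := Matrix.posSemidef_conjTranspose_mul_self M
  have hdiag : ∀ j, G j j = 1 := by
    intro j
    have : G j j = ∑ i, (N i j / Real.sqrt (c j)) ^ 2 := by
      simp [hG, Matrix.mul_apply, hM, Matrix.conjTranspose_apply, sq]
    rw [this]
    have : ∑ i, (N i j / Real.sqrt (c j)) ^ 2 = (∑ i, (N i j) ^ 2) / c j := by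
      rw [Finset.sum_div]
      refine Finset.sum_congr rfl fun i _ => ?_
      rw [div_pow, Real.sq_sqrt (hc j).le]
    rw [this]
    exact div_self (hc j).ne'
  have htr : G.trace = (k : ℝ) := by
    simp [Matrix.trace, Matrix.diag, hdiag]
  have hdetG : G.det = M.det ^ 2 := by
    rw [hG, Matrix.det_mul, Matrix.det_conjTranspose, sq]
    simp
  have hMle : M.det ^ 2 ≤ 1 := by
    rw [← hdetG]; exact det_le_one_of_psd_trace hk G hGpsd htr
  calc N.det ^ 2 = M.det ^ 2 * ∏ j, c j := by
        rw [hdetN, mul_pow, ← Finset.prod_pow]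
        congr 1
        exact Finset.prod_congr rfl fun j _ => Real.sq_sqrt (hc j).le
    _ ≤ 1 * ∏ j, c j := by
        apply mul_le_mul_of_nonneg_right hMle (Finset.prod_nonneg fun j _ => (hc j).le)
    _ = ∏ j, c j := one_mul _
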